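/- Let L be a Lie algebra over a field F such that the abelianization L/L² is finite-dimensional, and let h: L × L → L⊗L be a universal Lie pairing. Then L□L is a direct factor of L⊗L: there exists a Lie ideal W of L⊗L such that L⊗L is the internal direct sum of L□L and W, and consequently L⊗L ≅ (L□L) × (L∧L) as Lie algebras. -/

import Mathlib

universe u v w x

/-- A Lie pairing `ρ : L × L → H` of Lie algebras over a field `F`:
a bilinear map satisfying the three Lie-pairing relations. -/
structure IsLiePairing (F : Type u) [Field F] {L : Type v} {H : Type w}
    [LieRing L] [LieAlgebra F L] [LieRing H] [LieAlgebra F H]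
    (ρ : L → L → H) : Prop where
  add_left : ∀ l l' k : L, ρ (l + l') k = ρ l k + ρ l' k
  add_right : ∀ l k k' : L, ρ l (k + k') = ρ l k + ρ l k'
  smul_left : ∀ (c : F) (l k : L), ρ (c • l) k = c • ρ l k
  smul_right : ∀ (c : F) (l k : L), ρ l (c • k) = c • ρ l k
  bracket_left : ∀ l l' s : L, ρ ⁅l, l'⁆ s = ρ l ⁅l', s⁆ - ρ l' ⁅l, s⁆
  bracket_right : ∀ l s s' : L, ρ l ⁅s, s'⁆ = ρ ⁅s', l⁆ s - ρ ⁅s, l⁆ s'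
  bracket_bracket : ∀ l s l' s' : L, ρ ⁅l, s⁆ ⁅l', s'⁆ = -⁅ρ s l, ρ l' s'⁆

/-- `h : L × L → T` is a universal Lie pairing: `T` plays the role of the
nonabelian tensor square `L ⊗ L`, with `h l l' = l ⊗ l'`. -/
structure IsUniversalLiePairing (F : Type u) [Field F] (L : Type v) (T : Type w)
    [LieRing L] [LieAlgebra F L] [LieRing T] [LieAlgebra F T]
    (h : L → L → T) : Prop where
  isLiePairing : IsLiePairing F h
  universal : ∀ (Q : Type (max u v w)) [LieRing Q] [LieAlgebra F Q]
      (h' : L → L → Q), IsLiePairing F h' →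
        ∃! ζ : T →ₗ⁅F⁆ Q, ∀ x y : L, ζ (h x y) = h' x y


/-- The product of two Lie rings is a Lie ring. -/
instance prodLieRing (A : Type u) (B : Type v) [LieRing A] [LieRing B] :
    LieRing (A × B) where
  bracket x y := (⁅x.1, y.1⁆, ⁅x.2, y.2⁆)
  add_lie x y z := by simp [Prod.ext_iff, add_lie]
  lie_add x y z := by simp [Prod.ext_iff, lie_add]
  lie_self x := by simp [Prod.ext_iff]
  leibniz_lie x y z := by simp [Prod.ext_iff]

/-- The product of two Lie algebras is a Lie algebra. -/
instance prodLieAlgebra (F : Type x) [Field F] (A : Type u) (B : Type v)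
    [LieRing A] [LieRing B] [LieAlgebra F A] [LieAlgebra F B] :
    LieAlgebra F (A × B) where
  lie_smul t x y := Prod.ext (lie_smul t x.1 y.1) (lie_smul t x.2 y.2)

namespace ULiftLie
variable {R : Type u} [CommRing R] {A : Type v} [LieRing A] [LieAlgebra R A]

instance : LieRing (ULift.{w} A) where
  bracket x y := ⟨⁅x.down, y.down⁆⟩
  add_lie x y z := ULift.down_injective (add_lie x.down y.down z.down)
  lie_add x y z := ULift.down_injective (lie_add x.down y.down z.down)
  lie_self x := ULift.down_injective (lie_self x.down)
  leibniz_lie x y z := ULift.down_injective (leibniz_lie x.down y.down z.down)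

@[simp] lemma lie_down (x y : ULift.{w} A) : (⁅x, y⁆ : ULift A).down = ⁅x.down, y.down⁆ := rfl

instance : LieAlgebra R (ULift.{w} A) where
  lie_smul t x y := ULift.down_injective (lie_smul t x.down y.down)

/-- `ULift` of a Lie algebra is Lie-equivalent to it. -/
def uliftEquiv : ULift.{w} A ≃ₗ⁅R⁆ A :=
  { ULift.moduleEquiv with map_lie' := rfl }

@[simp] lemma uliftEquiv_apply (a : ULift.{w} A) : (uliftEquiv (R := R) a) = a.down := rfl

end ULiftLie

namespace LiePairingLemmas
variable {F : Type x} [Field F] {L : Type v} {T : Type w}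
  [LieRing L] [LieAlgebra F L] [LieRing T] [LieAlgebra F T]
  {h : L → L → T} (hp : IsLiePairing F h)

include hp

lemma h0l (y : L) : h 0 y = 0 := by
  have := hp.smul_left 0 0 y; simpa using this

lemma h0r (y : L) : h y 0 = 0 := by
  have := hp.smul_right 0 y 0; simpa using this

lemma hnegl (a b : L) : h (-a) b = - h a b := by
  have := hp.smul_left (-1) a b; simpa using this

lemma hnegr (a b : L) : h a (-b) = - h a b := by
  have := hp.smul_right (-1) a b; simpa using this

lemma hsubl (a b c : L) : h (a - b) c = h a c - h b c := by
  rw [sub_eq_add_neg, hp.add_left, hnegl hp, sub_eq_add_neg]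

lemma hsubr (a b c : L) : h a (b - c) = h a b - h a c := by
  rw [sub_eq_add_neg, hp.add_right, hnegr hp, sub_eq_add_neg]

lemma lie_h (a b c d : L) : ⁅h a b, h c d⁆ = h ⁅a, b⁆ ⁅c, d⁆ := by
  have e := hp.bracket_bracket b a c d
  calc ⁅h a b, h c d⁆ = -h ⁅b, a⁆ ⁅c, d⁆ := by rw [e]; abel
    _ = h (-⁅b, a⁆) ⁅c, d⁆ := by rw [hnegl hp]
    _ = h ⁅a, b⁆ ⁅c, d⁆ := by rw [lie_skew]

lemma q_bracket (a c : L) : h ⁅a, c⁆ ⁅a, c⁆ = 0 := by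
  rw [← lie_h hp]; exact lie_self _

lemma b_bracket (l a c : L) : h l ⁅a, c⁆ + h ⁅a, c⁆ l = 0 := by
  have e1 := hp.bracket_left l a c
  have e2 := hp.bracket_right a l c
  rw [e2] at e1
  have e3 : h ⁅l, a⁆ c = (h l ⁅a, c⁆ - h ⁅c, a⁆ l) + h ⁅l, a⁆ c := by
    conv_lhs => rw [e1]
    abel
  have e4 : h l ⁅a, c⁆ - h ⁅c, a⁆ l = 0 := (right_eq_add.mp e3)
  have e5 : h l ⁅a, c⁆ = h ⁅c, a⁆ l := by
    have := sub_eq_zero.mp e4; exact this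
  rw [e5, show (⁅c, a⁆ : L) = -⁅a, c⁆ by rw [lie_skew], hnegl hp]
  abel

lemma hsmul2 (e e' : F) (a b : L) : h (e • a) (e' • b) = (e * e') • h a b := by
  rw [hp.smul_left, hp.smul_right, smul_smul]


lemma K_props (m : L)
    (hm : m ∈ (⁅(⊤ : LieIdeal F L), (⊤ : LieIdeal F L)⁆ : LieIdeal F L)) :
    h m m = 0 ∧ ∀ l, h l m + h m l = 0 := by
  rw [← LieSubmodule.mem_toSubmodule, LieSubmodule.lieIdeal_oper_eq_linear_span'] at hm
  induction hm using Submodule.span_induction with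
  | mem z hz =>
    obtain ⟨a, -, c, -, rfl⟩ := hz
    exact ⟨q_bracket hp a c, fun l => b_bracket hp l a c⟩
  | zero => exact ⟨h0l hp 0, fun l => by rw [h0l hp, h0r hp, add_zero]⟩
  | add z z' hz hz' ihz ihz' =>
    obtain ⟨ihz1, ihz2⟩ := ihz
    obtain ⟨ihz1', ihz2'⟩ := ihz'
    constructor
    · rw [hp.add_left, hp.add_right, hp.add_right, ihz1, ihz1']
      have := ihz2' z
      calc (0 : T) + h z z' + (h z' z + 0) = h z z' + h z' z := by abel
        _ = 0 := ihz2' z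
    · intro l
      rw [hp.add_left, hp.add_right]
      calc h l z + h l z' + (h z l + h z' l)
          = (h l z + h z l) + (h l z' + h z' l) := by abel
        _ = 0 := by rw [ihz2 l, ihz2' l, add_zero]
  | smul e z hz ihz =>
    obtain ⟨ihz1, ihz2⟩ := ihz
    constructor
    · rw [hsmul2 hp, ihz1, smul_zero]
    · intro l
      rw [hp.smul_right, hp.smul_left, ← smul_add, ihz2 l, smul_zero]

lemma hsum_r {ι : Type*} (z : L) (s : Finset ι) (f : ι → L) :
    h z (∑ i ∈ s, f i) = ∑ i ∈ s, h z (f i) := by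
  classical
  induction s using Finset.induction_on with
  | empty => simp [h0r hp]
  | insert a s' hns ih => rw [Finset.sum_insert hns, Finset.sum_insert hns,
      hp.add_right, ih]

lemma hsum_l {ι : Type*} (z : L) (s : Finset ι) (f : ι → L) :
    h (∑ i ∈ s, f i) z = ∑ i ∈ s, h (f i) z := by
  classical
  induction s using Finset.induction_on with
  | empty => simp [h0l hp]
  | insert a s' hns ih => rw [Finset.sum_insert hns, Finset.sum_insert hns,
      hp.add_left, ih]

lemma q_expand {ι : Type*} [LinearOrder ι] (s : Finset ι) (xv : ι → L) :
    h (∑ i ∈ s, xv i) (∑ i ∈ s, xv i)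
      = (∑ j ∈ s, h (xv j) (xv j))
        + ∑ j ∈ s, ∑ i ∈ s.filter (· < j), (h (xv i) (xv j) + h (xv j) (xv i)) := by
  classical
  induction s using Finset.induction_on_max with
  | empty => simp [h0l hp]
  | insert a s' ha ih =>
    have hans : a ∉ s' := fun hmem => lt_irrefl a (ha a hmem)
    rw [Finset.sum_insert hans, Finset.sum_insert hans, Finset.sum_insert hans]
    have hfa : (insert a s').filter (· < a) = s' := by
      ext i
      simp only [Finset.mem_filter, Finset.mem_insert]
      constructor
      · rintro ⟨hi | hi, hlt⟩
        · exact absurd hlt (by simp [hi])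
        · exact hi
      · intro hi; exact ⟨Or.inr hi, ha i hi⟩
    have hfj : ∀ j ∈ s', (insert a s').filter (· < j) = s'.filter (· < j) := by
      intro j hj
      ext i
      simp only [Finset.mem_filter, Finset.mem_insert]
      constructor
      · rintro ⟨hi | hi, hlt⟩
        · exact absurd hlt (by simp [hi]; exact le_of_lt (ha j hj))
        · exact ⟨hi, hlt⟩
      · rintro ⟨hi, hlt⟩; exact ⟨Or.inr hi, hlt⟩
    have hcong : ∑ j ∈ s', ∑ i ∈ (insert a s').filter (· < j),
          (h (xv i) (xv j) + h (xv j) (xv i))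
        = ∑ j ∈ s', ∑ i ∈ s'.filter (· < j), (h (xv i) (xv j) + h (xv j) (xv i)) :=
      Finset.sum_congr rfl (fun j hj => by rw [hfj j hj])
    rw [hfa, hcong]
    rw [hp.add_left, hp.add_right, hp.add_right, ih,
      hsum_r hp (xv a) s' xv, hsum_l hp (xv a) s' xv]
    rw [show ∑ i ∈ s', (h (xv i) (xv a) + h (xv a) (xv i))
        = (∑ i ∈ s', h (xv i) (xv a)) + ∑ i ∈ s', h (xv a) (xv i) from
      Finset.sum_add_distrib]
    abel

lemma q_congr (l m : L)
    (hm : m ∈ (⁅(⊤ : LieIdeal F L), (⊤ : LieIdeal F L)⁆ : LieIdeal F L)) :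
    h (l + m) (l + m) = h l l := by
  obtain ⟨h1, h2⟩ := K_props hp m hm
  rw [hp.add_left, hp.add_right, hp.add_right, h1]
  calc h l l + h l m + (h m l + 0) = h l l + (h l m + h m l) := by abel
    _ = h l l := by rw [h2 l, add_zero]


lemma exists_beta
    [FiniteDimensional F (L ⧸ ⁅(⊤ : LieIdeal F L), (⊤ : LieIdeal F L)⁆)] :
    ∃ β : L → L → T,
      (∀ a b, β a b ∈ Submodule.span F {z : T | ∃ l : L, z = h l l}) ∧
      (∀ l, β l l = h l l) ∧
      (∀ a a' b, β (a + a') b = β a b + β a' b) ∧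
      (∀ a b b', β a (b + b') = β a b + β a b') ∧
      (∀ (e : F) a b, β (e • a) b = e • β a b) ∧
      (∀ (e : F) a b, β a (e • b) = e • β a b) ∧
      (∀ a b, a ∈ (⁅(⊤ : LieIdeal F L), (⊤ : LieIdeal F L)⁆ : LieIdeal F L) → β a b = 0) ∧
      (∀ a b, b ∈ (⁅(⊤ : LieIdeal F L), (⊤ : LieIdeal F L)⁆ : LieIdeal F L) → β a b = 0) := by
  classical
  set K : LieIdeal F L := ⁅(⊤ : LieIdeal F L), (⊤ : LieIdeal F L)⁆ with hKdef
  set n : ℕ := Module.finrank F (L ⧸ K) with hn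
  set bV : Module.Basis (Fin n) F (L ⧸ K) := Module.finBasis F (L ⧸ K) with hbV
  obtain ⟨u, hu⟩ : ∃ u : Fin n → L,
      ∀ i, (LieSubmodule.Quotient.mk (N := K) (u i)) = bV i := by
    choose u hu using fun i => Submodule.Quotient.mk_surjective K.toSubmodule (bV i)
    exact ⟨u, hu⟩
  set π : L → L ⧸ K := LieSubmodule.Quotient.mk (N := K) with hπ
  set c : Fin n → L → F := fun i l => bV.repr (π l) i with hc
  have c_add : ∀ i a a', c i (a + a') = c i a + c i a' := by
    intro i a a'
    simp only [hc, hπ]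
    rw [show (LieSubmodule.Quotient.mk (N := K) (a + a'))
        = LieSubmodule.Quotient.mk (N := K) a + LieSubmodule.Quotient.mk (N := K) a' from
      Submodule.Quotient.mk_add _, map_add]
    rfl
  have c_smul : ∀ i (e : F) a, c i (e • a) = e * c i a := by
    intro i e a
    simp only [hc, hπ]
    rw [show (LieSubmodule.Quotient.mk (N := K) (e • a))
        = e • LieSubmodule.Quotient.mk (N := K) a from Submodule.Quotient.mk_smul _ _ _,
      map_smul]
    rfl
  have c_zeroK : ∀ i a, a ∈ K → c i a = 0 := by
    intro i a ha
    simp only [hc, hπ]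
    rw [show (LieSubmodule.Quotient.mk (N := K) a) = 0 from
      (LieSubmodule.Quotient.mk_eq_zero').mpr ha]
    simp
  have hπu : ∀ l, π (∑ i, c i l • u i) = π l := by
    intro l
    have : π (∑ i, c i l • u i) = ∑ i, c i l • π (u i) := by
      simp only [hπ]
      rw [show (LieSubmodule.Quotient.mk (N := K) (∑ i, c i l • u i))
          = K.toSubmodule.mkQ (∑ i, c i l • u i) from rfl]
      rw [map_sum]
      simp [Submodule.mkQ_apply, Submodule.Quotient.mk_smul]
    rw [this]
    simp only [hu]
    exact bV.sum_repr (π l)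
  have hdiff : ∀ l, l - (∑ i, c i l • u i) ∈ K := by
    intro l
    rw [← LieSubmodule.Quotient.mk_eq_zero' (N := K)]
    rw [show (LieSubmodule.Quotient.mk (N := K) (l - ∑ i, c i l • u i))
        = π l - π (∑ i, c i l • u i) from Submodule.Quotient.mk_sub _]
    rw [hπu l, sub_self]
  -- the candidate bilinear map
  refine ⟨fun a b =>
    (∑ j, (c j a * c j b) • h (u j) (u j))
      + ∑ j, ∑ i ∈ Finset.univ.filter (· < j),
          (c i a * c j b) • (h (u i) (u j) + h (u j) (u i)), ?_, ?_, ?_, ?_, ?_, ?_, ?_, ?_⟩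
  · -- membership in the span
    intro a b
    apply Submodule.add_mem
    · apply Submodule.sum_mem
      intro j _
      exact Submodule.smul_mem _ _ (Submodule.subset_span ⟨u j, rfl⟩)
    · apply Submodule.sum_mem
      intro j _
      apply Submodule.sum_mem
      intro i _
      apply Submodule.smul_mem
      have : h (u i) (u j) + h (u j) (u i)
          = h (u i + u j) (u i + u j) - h (u i) (u i) - h (u j) (u j) := by
        rw [hp.add_left, hp.add_right, hp.add_right]
        abel
      rw [this]
      apply Submodule.sub_mem
      apply Submodule.sub_mem
      · exact Submodule.subset_span ⟨u i + u j, rfl⟩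
      · exact Submodule.subset_span ⟨u i, rfl⟩
      · exact Submodule.subset_span ⟨u j, rfl⟩
  · -- diagonal values
    intro l
    have hl : h l l = h ((∑ i, c i l • u i) + (l - ∑ i, c i l • u i))
        ((∑ i, c i l • u i) + (l - ∑ i, c i l • u i)) := by
      congr 1 <;> abel
    have main : h l l = (∑ j, (c j l * c j l) • h (u j) (u j))
        + ∑ j, ∑ i ∈ Finset.univ.filter (· < j),
            (c i l * c j l) • (h (u i) (u j) + h (u j) (u i)) := by
      rw [hl, q_congr hp _ _ (hdiff l), q_expand hp Finset.univ (fun i => c i l • u i)]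
      congr 1
      · exact Finset.sum_congr rfl fun j _ => hsmul2 hp _ _ _ _
      · refine Finset.sum_congr rfl fun j _ => Finset.sum_congr rfl fun i hi => ?_
        rw [hsmul2 hp, hsmul2 hp, smul_add, mul_comm (c j l) (c i l)]
    exact main.symm
  · intro a a' b
    simp only [c_add, add_mul, add_smul, Finset.sum_add_distrib]
    abel
  · intro a b b'
    simp only [c_add, mul_add, add_smul, Finset.sum_add_distrib]
    abel
  · intro e a b
    simp only [c_smul, mul_assoc, mul_smul, smul_add, Finset.smul_sum]
  · intro e a b
    simp only [c_smul, mul_left_comm, mul_smul, smul_add, Finset.smul_sum]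
  · intro a b ha
    simp [c_zeroK _ a ha]
  · intro a b hb
    simp [c_zeroK _ b hb]

end LiePairingLemmas


open LiePairingLemmas ULiftLie in
theorem main_construction (F : Type x) [Field F]
    (L : Type v) (T : Type w) [LieRing L] [LieAlgebra F L]
    [LieRing T] [LieAlgebra F T]
    (h : L → L → T) (hh : IsUniversalLiePairing F L T h)
    [FiniteDimensional F (L ⧸ ⁅(⊤ : LieIdeal F L), (⊤ : LieIdeal F L)⁆)]
    (sq : LieIdeal F T)
    (hsq : (sq : Submodule F T) = Submodule.span F {z : T | ∃ l : L, z = h l l}) :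
    ∃ W : LieIdeal F T, sq ⊓ W = ⊥ ∧ sq ⊔ W = ⊤ ∧
      Nonempty (T ≃ₗ⁅F⁆ sq × (T ⧸ sq)) := by
  classical
  obtain ⟨hp, huniv⟩ := hh
  set S : Set T := {z : T | ∃ l : L, z = h l l} with hS
  have hsq' : (LieSubmodule.toSubmodule sq : Submodule F T) = Submodule.span F S := hsq
  -- the square ideal is abelian
  have sq_ab : ∀ z ∈ Submodule.span F S, ∀ w ∈ Submodule.span F S, ⁅z, w⁆ = (0 : T) := by
    intro z hz
    induction hz using Submodule.span_induction with
    | mem z hzS =>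
      intro w hw
      induction hw using Submodule.span_induction with
      | mem w hwS =>
        obtain ⟨l, rfl⟩ := hzS; obtain ⟨m, rfl⟩ := hwS
        rw [lie_h hp, lie_self, lie_self, h0l hp]
      | zero => simp
      | add w w' _ _ ih ih' => rw [lie_add, ih, ih', add_zero]
      | smul e w _ ih => rw [lie_smul, ih, smul_zero]
    | zero => intro w hw; simp
    | add z z' _ _ ih ih' => intro w hw; rw [add_lie, ih w hw, ih' w hw, add_zero]
    | smul e z _ ih => intro w hw; rw [smul_lie, ih w hw, smul_zero]
  obtain ⟨β, βmem, βdiag, βaddl, βaddr, βsmull, βsmulr, βkerl, βkerr⟩ := exists_beta hp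
  have hmemsq : ∀ a b, β a b ∈ sq := fun a b => by
    rw [← LieSubmodule.mem_toSubmodule, hsq']; exact βmem a b
  -- the pairing into sq × T ⧸ sq
  set h3 : L → L → ULift.{max x v} (↥sq × (T ⧸ sq)) := fun a b =>
    ULift.up (⟨β a b, hmemsq a b⟩, LieSubmodule.Quotient.mk (h a b)) with hh3
  have coe_br : ∀ (z w : ↥sq), ((⁅z, w⁆ : ↥sq) : T) = ⁅(z : T), (w : T)⁆ := fun z w => rfl
  have br_sq : ∀ (z w : ↥sq), ⁅z, w⁆ = (0 : ↥sq) := by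
    intro z w
    apply Subtype.ext
    rw [coe_br]
    have hz := z.2; have hw := w.2
    rw [← LieSubmodule.mem_toSubmodule, hsq'] at hz hw
    simpa using sq_ab _ hz _ hw
  have hK : ∀ (a b : L), ⁅a, b⁆ ∈ (⁅(⊤ : LieIdeal F L), (⊤ : LieIdeal F L)⁆ : LieIdeal F L) :=
    fun a b => LieSubmodule.lie_mem_lie (LieSubmodule.mem_top a) (LieSubmodule.mem_top b)
  have hpair : IsLiePairing F h3 := by
    constructor
    · intro l l' k
      apply ULift.down_injective; apply Prod.ext
      · exact Subtype.ext (βaddl l l' k)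
      · show LieSubmodule.Quotient.mk (h (l + l') k) = _
        rw [hp.add_left]; exact Submodule.Quotient.mk_add _
    · intro l k k'
      apply ULift.down_injective; apply Prod.ext
      · exact Subtype.ext (βaddr l k k')
      · show LieSubmodule.Quotient.mk (h l (k + k')) = _
        rw [hp.add_right]; exact Submodule.Quotient.mk_add _
    · intro e l k
      apply ULift.down_injective; apply Prod.ext
      · exact Subtype.ext (βsmull e l k)
      · show LieSubmodule.Quotient.mk (h (e • l) k) = _
        rw [hp.smul_left]; exact Submodule.Quotient.mk_smul _ _ _
    · intro e l k
      apply ULift.down_injective; apply Prod.ext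
      · exact Subtype.ext (βsmulr e l k)
      · show LieSubmodule.Quotient.mk (h l (e • k)) = _
        rw [hp.smul_right]; exact Submodule.Quotient.mk_smul _ _ _
    · intro l l' s
      apply ULift.down_injective; apply Prod.ext
      · show (⟨β ⁅l, l'⁆ s, hmemsq _ _⟩ : ↥sq)
            = (⟨β l ⁅l', s⁆, hmemsq _ _⟩ : ↥sq) - (⟨β l' ⁅l, s⁆, hmemsq _ _⟩ : ↥sq)
        apply Subtype.ext
        simp only [AddSubgroupClass.coe_sub]
        rw [βkerl _ _ (hK l l'), βkerr _ _ (hK l' s), βkerr _ _ (hK l s), sub_zero]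
      · show LieSubmodule.Quotient.mk (h ⁅l, l'⁆ s) = _
        rw [hp.bracket_left]; exact Submodule.Quotient.mk_sub _
    · intro l s s'
      apply ULift.down_injective; apply Prod.ext
      · show (⟨β l ⁅s, s'⁆, hmemsq _ _⟩ : ↥sq)
            = (⟨β ⁅s', l⁆ s, hmemsq _ _⟩ : ↥sq) - (⟨β ⁅s, l⁆ s', hmemsq _ _⟩ : ↥sq)
        apply Subtype.ext
        simp only [AddSubgroupClass.coe_sub]
        rw [βkerr _ _ (hK s s'), βkerl _ _ (hK s' l), βkerl _ _ (hK s l), sub_zero]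
      · show LieSubmodule.Quotient.mk (h l ⁅s, s'⁆) = _
        rw [hp.bracket_right]; exact Submodule.Quotient.mk_sub _
    · intro l s l' s'
      apply ULift.down_injective; apply Prod.ext
      · show (⟨β ⁅l, s⁆ ⁅l', s'⁆, hmemsq _ _⟩ : ↥sq)
            = -⁅(⟨β s l, hmemsq _ _⟩ : ↥sq), (⟨β l' s', hmemsq _ _⟩ : ↥sq)⁆
        rw [br_sq, neg_zero]
        exact Subtype.ext (βkerl _ _ (hK l s))
      · show LieSubmodule.Quotient.mk (h ⁅l, s⁆ ⁅l', s'⁆) = _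
        rw [hp.bracket_bracket]
        rw [show (LieSubmodule.Quotient.mk (N := sq) (-⁅h s l, h l' s'⁆))
            = -LieSubmodule.Quotient.mk ⁅h s l, h l' s'⁆ from Submodule.Quotient.mk_neg _]
        rfl
  obtain ⟨ζ, hζ, -⟩ := huniv (ULift.{max x v} (↥sq × (T ⧸ sq))) h3 hpair
  set p1 : T → ↥sq := fun t => ((ζ t).down).1 with hp1
  have p1_h : ∀ a b, p1 (h a b) = ⟨β a b, hmemsq a b⟩ := by
    intro a b
    show ((ζ (h a b)).down).1 = _
    rw [hζ a b]
  have p1_add : ∀ t t', p1 (t + t') = p1 t + p1 t' := by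
    intro t t'; show ((ζ (t + t')).down).1 = _; rw [map_add]; rfl
  have p1_smul : ∀ (e : F) t, p1 (e • t) = e • p1 t := by
    intro e t; show ((ζ (e • t)).down).1 = _; rw [map_smul]; rfl
  have p1_sub : ∀ t t', p1 (t - t') = p1 t - p1 t' := by
    intro t t'; show ((ζ (t - t')).down).1 = _; rw [show ζ (t - t') = ζ t - ζ t' from LinearMap.map_sub ζ.toLinearMap t t']; rfl
  have p1_lie : ∀ t t', p1 ⁅t, t'⁆ = ⁅p1 t, p1 t'⁆ := by
    intro t t'; show ((ζ ⁅t, t'⁆).down).1 = _; rw [ζ.map_lie]; rfl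
  have p1_zero : p1 0 = 0 := by
    show ((ζ 0).down).1 = _; rw [map_zero]; rfl
  have p1_sq : ∀ z, z ∈ sq → ((p1 z : T)) = z := by
    intro z hz
    rw [← LieSubmodule.mem_toSubmodule, hsq'] at hz
    induction hz using Submodule.span_induction with
    | mem z hzS =>
      obtain ⟨l, rfl⟩ := hzS
      rw [p1_h l l]
      exact βdiag l
    | zero => rw [p1_zero]; rfl
    | add z z' _ _ ih ih' => rw [p1_add]; show ((p1 z : T)) + ((p1 z' : T)) = z + z'; rw [ih, ih']
    | smul e z _ ih => rw [p1_smul]; show e • ((p1 z : T)) = e • z; rw [ih]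
  set p1Hom : T →ₗ⁅F⁆ ↥sq :=
    { toFun := p1
      map_add' := p1_add
      map_smul' := fun e t => p1_smul e t
      map_lie' := fun {t t'} => p1_lie t t' } with hp1Hom
  have p1_fix : ∀ t, p1 ((p1 t : T)) = p1 t := fun t =>
    Subtype.ext (p1_sq _ (p1 t).2)
  refine ⟨p1Hom.ker, ?_, ?_, ?_⟩
  · rw [LieSubmodule.eq_bot_iff]
    intro m hm
    rw [LieSubmodule.mem_inf] at hm
    obtain ⟨hm1, hm2⟩ := hm
    rw [LieHom.mem_ker] at hm2
    have := p1_sq m hm1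
    rw [show p1Hom m = p1 m from rfl] at hm2
    rw [hm2] at this
    simpa using this.symm
  · rw [eq_top_iff]
    intro t _
    rw [LieSubmodule.mem_sup]
    refine ⟨(p1 t : T), (p1 t).2, t - (p1 t : T), ?_, by abel⟩
    rw [LieHom.mem_ker]
    show p1 (t - (p1 t : T)) = 0
    rw [p1_sub, p1_fix, sub_self]
  · set eHom : T →ₗ⁅F⁆ ↥sq × (T ⧸ sq) :=
      { toFun := fun t => (p1 t, LieSubmodule.Quotient.mk t)
        map_add' := fun t t' => Prod.ext (p1_add t t') (Submodule.Quotient.mk_add _)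
        map_smul' := fun e t => Prod.ext (p1_smul e t) (Submodule.Quotient.mk_smul _ _ _)
        map_lie' := fun {t t'} => Prod.ext (p1_lie t t') rfl } with heHom
    have hbij : Function.Bijective eHom := by
      constructor
      · intro t t' heq
        have h1 : p1 t = p1 t' := congrArg (fun q => q.1) heq
        have h2 : LieSubmodule.Quotient.mk (N := sq) t = LieSubmodule.Quotient.mk t' :=
          congrArg (fun q => q.2) heq
        have hmem : t - t' ∈ sq := by
          rw [← LieSubmodule.Quotient.mk_eq_zero' (N := sq),
            show (LieSubmodule.Quotient.mk (N := sq) (t - t'))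
              = LieSubmodule.Quotient.mk t - LieSubmodule.Quotient.mk t' from
              Submodule.Quotient.mk_sub _, h2, sub_self]
        have hfix := p1_sq _ hmem
        rw [p1_sub, h1, sub_self] at hfix
        have : (0 : T) = t - t' := by simpa using hfix
        exact sub_eq_zero.mp this.symm
      · rintro ⟨z, y⟩
        obtain ⟨t, rfl⟩ := Submodule.Quotient.mk_surjective sq.toSubmodule y
        refine ⟨t + ((z : T) - (p1 t : T)), Prod.ext ?_ ?_⟩
        · show p1 (t + ((z : T) - (p1 t : T))) = z
          rw [show t + ((z : T) - (p1 t : T)) = t + (z : T) - (p1 t : T) by abel,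
            p1_sub, p1_add, p1_fix]
          have : p1 (z : T) = z := Subtype.ext (p1_sq (z : T) z.2)
          rw [this]; abel
        · show LieSubmodule.Quotient.mk (t + ((z : T) - (p1 t : T))) = _
          rw [show t + ((z : T) - (p1 t : T)) = t + (z : T) - (p1 t : T) by abel]
          rw [show (LieSubmodule.Quotient.mk (N := sq) (t + (z : T) - (p1 t : T)))
              = LieSubmodule.Quotient.mk (t + (z : T)) - LieSubmodule.Quotient.mk ((p1 t : T))
              from Submodule.Quotient.mk_sub _,
            show (LieSubmodule.Quotient.mk (N := sq) (t + (z : T)))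
              = LieSubmodule.Quotient.mk t + LieSubmodule.Quotient.mk ((z : T))
              from Submodule.Quotient.mk_add _]
          rw [(LieSubmodule.Quotient.mk_eq_zero' (N := sq)).mpr z.2,
            (LieSubmodule.Quotient.mk_eq_zero' (N := sq)).mpr (p1 t).2]
          simp
    exact ⟨LieEquiv.ofBijective eHom hbij⟩


/-- If `L/L²` is finite-dimensional then the square `L□L` is a direct factor
of the tensor square `L⊗L`: there is a Lie ideal `W` with
`L⊗L = L□L ⊕ W` internally, and consequently
`L⊗L ≅ (L□L) × (L∧L)` as Lie algebras (where `L∧L = (L⊗L)/(L□L)`). -/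
theorem tensorSquare_isDirectSum_square_exterior (F : Type x) [Field F]
    (L : Type v) (T : Type w) [LieRing L] [LieAlgebra F L]
    [LieRing T] [LieAlgebra F T]
    (h : L → L → T) (hh : IsUniversalLiePairing F L T h)
    [FiniteDimensional F (L ⧸ ⁅(⊤ : LieIdeal F L), (⊤ : LieIdeal F L)⁆)]
    (sq : LieIdeal F T)
    (hsq : (sq : Submodule F T) = Submodule.span F {z : T | ∃ l : L, z = h l l}) :
    ∃ W : LieIdeal F T, sq ⊓ W = ⊥ ∧ sq ⊔ W = ⊤ ∧
      Nonempty (T ≃ₗ⁅F⁆ sq × (T ⧸ sq)) := by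

  classical
  open LiePairingLemmas ULiftLie in
  exact main_construction F L T h hh sq hsq
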